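/- For a decision diagram D with binary arc values, the projection onto the x-variables of the network flow polytope NF(D) equals the convex hull of Sol(D). -/

import Mathlib

/-- A layered decision diagram with `n` arc layers. Arcs in layer `i`
carry a value (variable assignment) and a length (objective contribution). -/
structure DD (n : ℕ) where
  V : Type
  Arc : Type
  src : Arc → V
  tgt : Arc → V
  lay : Arc → Fin n
  val : Arc → ℤ
  len : Arc → ℝ
  root : V
  terminal : V

namespace DD

variable {n : ℕ}

/-- `p` is a root-to-terminal path: one arc per layer, consecutive arcs chained,
starting at the root and ending at the terminal. -/
def IsPath (D : DD n) (p : Fin n → D.Arc) : Prop :=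
  (∀ i, D.lay (p i) = i) ∧
  (∀ i : Fin n, i.val = 0 → D.src (p i) = D.root) ∧
  (∀ i : Fin n, i.val + 1 = n → D.tgt (p i) = D.terminal) ∧
  (∀ i : Fin n, ∀ h : i.val + 1 < n, D.tgt (p i) = D.src (p ⟨i.val + 1, h⟩))

/-- The integer point encoded by a path. -/
def point (D : DD n) (p : Fin n → D.Arc) : Fin n → ℤ := fun i => D.val (p i)

/-- The real point encoded by a path. -/
def pointR (D : DD n) (p : Fin n → D.Arc) : Fin n → ℝ := fun i => (D.val (p i) : ℝ)

/-- The length of a path. -/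
def plen (D : DD n) (p : Fin n → D.Arc) : ℝ := ∑ i, D.len (p i)

/-- The solution set encoded by the diagram. -/
def Sol (D : DD n) : Set (Fin n → ℤ) := {x | ∃ p, D.IsPath p ∧ D.point p = x}

end DD

/-- The network flow polytope `NF(D)`: nonnegative arc flows with flow balance at
internal nodes, unit flow out of the root and into the terminal, and linking
constraints tying the `x` variables to the arc values. -/
def NF {n : ℕ} (D : DD n) [Fintype D.Arc] [DecidableEq D.V] :
    Set ((Fin n → ℝ) × (D.Arc → ℝ)) :=
  {xy | (∀ a, 0 ≤ xy.2 a) ∧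
    (∀ u : D.V, u ≠ D.root → u ≠ D.terminal →
      ∑ a ∈ Finset.univ.filter (fun a => D.src a = u), xy.2 a
        = ∑ a ∈ Finset.univ.filter (fun a => D.tgt a = u), xy.2 a) ∧
    (∑ a ∈ Finset.univ.filter (fun a => D.src a = D.root), xy.2 a = 1) ∧
    (∑ a ∈ Finset.univ.filter (fun a => D.tgt a = D.terminal), xy.2 a = 1) ∧
    (∀ i : Fin n, ∑ a ∈ Finset.univ.filter (fun a => D.lay a = i),
        (D.val a : ℝ) * xy.2 a = xy.1 i)}

open Finset

section Aux

variable {n : ℕ} (D : DD n) [Fintype D.Arc] [DecidableEq D.V]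

lemma path_inj {p : Fin n → D.Arc} (hp : D.IsPath p) : Function.Injective p := by
  intro i j h
  have h1 := hp.1 i
  have h2 := hp.1 j
  rw [h] at h1
  exact h1.symm.trans h2

open Classical in
noncomputable def pathFlow (p : Fin n → D.Arc) : D.Arc → ℝ :=
  fun a => if ∃ i, p i = a then 1 else 0

lemma pathFlow_nonneg (p : Fin n → D.Arc) (a : D.Arc) : 0 ≤ pathFlow D p a := by
  unfold pathFlow; split <;> norm_num

lemma pathFlow_eq_one (p : Fin n → D.Arc) (i : Fin n) : pathFlow D p (p i) = 1 := by
  unfold pathFlow; rw [if_pos ⟨i, rfl⟩]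

lemma pathFlow_eq_zero {p : Fin n → D.Arc} {a : D.Arc} (h : ∀ i, p i ≠ a) :
    pathFlow D p a = 0 := by
  unfold pathFlow
  rw [if_neg]
  rintro ⟨i, hi⟩
  exact h i hi

lemma sum_pathFlow {p : Fin n → D.Arc} (hp : D.IsPath p)
    (P : D.Arc → Prop) [DecidablePred P] (w : D.Arc → ℝ) :
    ∑ a ∈ univ.filter P, w a * pathFlow D p a
      = ∑ i, if P (p i) then w (p i) else 0 := by
  classical
  have key : ∀ a, w a * pathFlow D p a = ∑ i, if p i = a then w a else 0 := by
    intro a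
    by_cases h : ∃ i, p i = a
    · obtain ⟨i0, hi0⟩ := h
      rw [Finset.sum_eq_single i0]
      · rw [if_pos hi0]
        unfold pathFlow
        rw [if_pos ⟨i0, hi0⟩, mul_one]
      · intro j _ hj
        rw [if_neg]
        intro hja
        exact hj (path_inj D hp (hja.trans hi0.symm))
      · intro h'; exact absurd (mem_univ i0) h'
    · rw [pathFlow_eq_zero D (fun i hi => h ⟨i, hi⟩), mul_zero]
      rw [Finset.sum_eq_zero]
      intro j _
      rw [if_neg (fun hj => h ⟨j, hj⟩)]
  calc ∑ a ∈ univ.filter P, w a * pathFlow D p a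
      = ∑ a ∈ univ.filter P, ∑ i, if p i = a then w a else 0 := by
        exact Finset.sum_congr rfl (fun a _ => key a)
    _ = ∑ i, ∑ a ∈ univ.filter P, if p i = a then w a else 0 := Finset.sum_comm
    _ = ∑ i, if P (p i) then w (p i) else 0 := by
        apply Finset.sum_congr rfl
        intro i _
        have : ∑ a ∈ univ.filter P, (if p i = a then w a else 0)
            = ∑ a ∈ univ.filter P, (if a = p i then w a else 0) := by
          apply Finset.sum_congr rfl
          intro a _
          by_cases h : a = p i
          · rw [if_pos h, if_pos h.symm]
          · rw [if_neg h, if_neg (fun hh => h hh.symm)]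
        rw [this, Finset.sum_ite_eq' (univ.filter P) (p i) w]
        by_cases h : P (p i)
        · rw [if_pos h, if_pos (mem_filter.mpr ⟨mem_univ _, h⟩)]
        · rw [if_neg h, if_neg (fun hh => h (mem_filter.mp hh).2)]

lemma sum_indicator_unique {α : Type*} [Fintype α] (Q : α → Prop) [DecidablePred Q]
    (w : α → ℝ) (hu : ∀ i j, Q i → Q j → i = j) :
    ∑ i, (if Q i then w i else 0) = if h : ∃ i, Q i then w h.choose else 0 := by
  by_cases h : ∃ i, Q i
  · rw [dif_pos h]
    obtain ⟨i0, hi0⟩ := h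
    rw [Finset.sum_eq_single (Exists.choose (⟨i0, hi0⟩ : ∃ i, Q i))]
    · rw [if_pos (Exists.choose_spec (⟨i0, hi0⟩ : ∃ i, Q i))]
    · intro j _ hj
      rw [if_neg]
      intro hQj
      exact hj (hu _ _ hQj (Exists.choose_spec (⟨i0, hi0⟩ : ∃ i, Q i)))
    · intro h'; exact absurd (mem_univ _) h'
  · rw [dif_neg h, Finset.sum_eq_zero]
    intro j _
    rw [if_neg (fun hj => h ⟨j, hj⟩)]


variable (hn : 0 < n) (nlay : D.V → ℕ)
    (hsrc : ∀ a, nlay (D.src a) = (D.lay a : ℕ))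
    (htgt : ∀ a, nlay (D.tgt a) = (D.lay a : ℕ) + 1)
    (hroot : nlay D.root = 0) (hterm : nlay D.terminal = n)

include hsrc htgt hroot hterm in
lemma pathFlow_mem_NF (hn : 0 < n) {p : Fin n → D.Arc} (hp : D.IsPath p) :
    (D.pointR p, pathFlow D p) ∈ NF D := by
  classical
  refine ⟨fun a => pathFlow_nonneg D p a, ?_, ?_, ?_, ?_⟩
  · -- balance
    intro u hur hut
    have h1 : ∑ a ∈ univ.filter (fun a => D.src a = u), pathFlow D p a
        = ∑ i, if D.src (p i) = u then (1:ℝ) else 0 := by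
      have := sum_pathFlow D hp (fun a => D.src a = u) (fun _ => 1)
      simpa using this
    have h2 : ∑ a ∈ univ.filter (fun a => D.tgt a = u), pathFlow D p a
        = ∑ i, if D.tgt (p i) = u then (1:ℝ) else 0 := by
      have := sum_pathFlow D hp (fun a => D.tgt a = u) (fun _ => 1)
      simpa using this
    rw [h1, h2]
    have hu1 : ∀ i j : Fin n, D.src (p i) = u → D.src (p j) = u → i = j := by
      intro i j hi hj
      have e1 := hsrc (p i); have e2 := hsrc (p j)
      rw [hi] at e1; rw [hj] at e2
      rw [hp.1 i] at e1; rw [hp.1 j] at e2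
      exact Fin.ext (by omega)
    have hu2 : ∀ i j : Fin n, D.tgt (p i) = u → D.tgt (p j) = u → i = j := by
      intro i j hi hj
      have e1 := htgt (p i); have e2 := htgt (p j)
      rw [hi] at e1; rw [hj] at e2
      rw [hp.1 i] at e1; rw [hp.1 j] at e2
      exact Fin.ext (by omega)
    rw [sum_indicator_unique _ _ hu1, sum_indicator_unique _ _ hu2]
    have hiff : (∃ i, D.src (p i) = u) ↔ (∃ i, D.tgt (p i) = u) := by
      constructor
      · rintro ⟨j, hj⟩
        have hj0 : j.val ≠ 0 := by
          intro h0
          have h' := hp.2.1 j h0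
          rw [h'] at hj
          exact hur hj.symm
        have hjlt : j.val - 1 + 1 < n := by have := j.isLt; omega
        refine ⟨⟨j.val - 1, by omega⟩, ?_⟩
        have := hp.2.2.2 ⟨j.val - 1, by omega⟩ hjlt
        rw [this]
        have : (⟨j.val - 1 + 1, hjlt⟩ : Fin n) = j := Fin.ext (by simp; omega)
        rw [this, hj]
      · rintro ⟨i, hi⟩
        have hin : i.val + 1 ≠ n := by
          intro h
          have h' := hp.2.2.1 i h
          rw [h'] at hi
          exact hut hi.symm
        have hlt : i.val + 1 < n := by have := i.isLt; omega
        refine ⟨⟨i.val + 1, hlt⟩, ?_⟩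
        rw [← hp.2.2.2 i hlt, hi]
      
    by_cases h : ∃ i, D.src (p i) = u
    · rw [dif_pos h, dif_pos (hiff.mp h)]
    · rw [dif_neg h, dif_neg (fun h' => h (hiff.mpr h'))]
  · -- root
    have h1 : ∑ a ∈ univ.filter (fun a => D.src a = D.root), pathFlow D p a
        = ∑ i, if D.src (p i) = D.root then (1:ℝ) else 0 := by
      have := sum_pathFlow D hp (fun a => D.src a = D.root) (fun _ => 1)
      simpa using this
    rw [h1]
    have hu : ∀ i j : Fin n, D.src (p i) = D.root → D.src (p j) = D.root → i = j := by
      intro i j hi hj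
      have e1 := hsrc (p i); have e2 := hsrc (p j)
      rw [hi, hroot] at e1; rw [hj, hroot] at e2
      rw [hp.1 i] at e1; rw [hp.1 j] at e2
      exact Fin.ext (by omega)
    rw [sum_indicator_unique _ _ hu, dif_pos ⟨⟨0, hn⟩, hp.2.1 ⟨0, hn⟩ rfl⟩]
  · -- terminal
    have h1 : ∑ a ∈ univ.filter (fun a => D.tgt a = D.terminal), pathFlow D p a
        = ∑ i, if D.tgt (p i) = D.terminal then (1:ℝ) else 0 := by
      have := sum_pathFlow D hp (fun a => D.tgt a = D.terminal) (fun _ => 1)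
      simpa using this
    rw [h1]
    have hu : ∀ i j : Fin n, D.tgt (p i) = D.terminal → D.tgt (p j) = D.terminal → i = j := by
      intro i j hi hj
      have e1 := htgt (p i); have e2 := htgt (p j)
      rw [hi, hterm] at e1; rw [hj, hterm] at e2
      rw [hp.1 i] at e1; rw [hp.1 j] at e2
      exact Fin.ext (by omega)
    rw [sum_indicator_unique _ _ hu,
      dif_pos ⟨⟨n - 1, by omega⟩, hp.2.2.1 ⟨n - 1, by omega⟩ (by simp; omega)⟩]
  · -- linking
    intro i
    have h1 := sum_pathFlow D hp (fun a => D.lay a = i) (fun a => (D.val a : ℝ))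
    rw [h1]
    have : ∀ j : Fin n, (if D.lay (p j) = i then ((D.val (p j) : ℝ)) else 0)
        = if j = i then ((D.val (p j) : ℝ)) else 0 := by
      intro j
      rw [hp.1 j]
    simp only [this]
    rw [Finset.sum_ite_eq' univ i (fun j => (D.val (p j) : ℝ)), if_pos (mem_univ i)]
    rfl

include hsrc htgt hroot hterm in
lemma flow_eq_zero (y : D.Arc → ℝ) (hpos : ∀ a, 0 ≤ y a)
    (hbal : ∀ u : D.V, u ≠ D.root → u ≠ D.terminal →
      ∑ a ∈ univ.filter (fun a => D.src a = u), y a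
        = ∑ a ∈ univ.filter (fun a => D.tgt a = u), y a)
    (hr : ∑ a ∈ univ.filter (fun a => D.src a = D.root), y a = 0) :
    ∀ a, y a = 0 := by
  have key : ∀ k : ℕ, ∀ a : D.Arc, (D.lay a).val = k → y a = 0 := by
    intro k
    induction k using Nat.strong_induction_on with
    | _ k ih =>
      intro a hk
      by_cases hs : D.src a = D.root
      · have hmem : a ∈ univ.filter (fun b => D.src b = D.root) :=
          mem_filter.mpr ⟨mem_univ _, hs⟩
        have hle := Finset.single_le_sum (f := y) (fun b _ => hpos b) hmem
        have := hpos a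
        linarith [hr ▸ hle]
      · have hst : D.src a ≠ D.terminal := by
          intro h
          have e := hsrc a
          rw [h, hterm] at e
          have := (D.lay a).isLt
          omega
        have hb := hbal _ hs hst
        have hin : ∑ b ∈ univ.filter (fun b => D.tgt b = D.src a), y b = 0 := by
          apply Finset.sum_eq_zero
          intro b hb'
          have hbt : D.tgt b = D.src a := (mem_filter.mp hb').2
          have e1 := htgt b
          rw [hbt, hsrc a] at e1
          exact ih (D.lay b).val (by omega) b rfl
        rw [hin] at hb
        have hmem : a ∈ univ.filter (fun b => D.src b = D.src a) :=
          mem_filter.mpr ⟨mem_univ _, rfl⟩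
        have hle := Finset.single_le_sum (f := y) (fun b _ => hpos b) hmem
        have := hpos a
        linarith [hb ▸ hle]
  intro a
  exact key (D.lay a).val a rfl

include hsrc htgt hroot hterm in
lemma exists_pos_path (hn : 0 < n) (y : D.Arc → ℝ) (hpos : ∀ a, 0 ≤ y a)
    (hbal : ∀ u : D.V, u ≠ D.root → u ≠ D.terminal →
      ∑ a ∈ univ.filter (fun a => D.src a = u), y a
        = ∑ a ∈ univ.filter (fun a => D.tgt a = u), y a)
    (hr : ∑ a ∈ univ.filter (fun a => D.src a = D.root), y a = 1) :
    ∃ p : Fin n → D.Arc, D.IsPath p ∧ ∀ i, 0 < y (p i) := by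
  classical
  -- the first arc
  have hstart : ∃ a, a ∈ univ.filter (fun a => D.src a = D.root) ∧ 0 < y a := by
    have h0 : ∑ a ∈ univ.filter (fun a => D.src a = D.root), (0:ℝ) < 
        ∑ a ∈ univ.filter (fun a => D.src a = D.root), y a := by
      rw [hr, Finset.sum_const, smul_zero]; norm_num
    obtain ⟨a, ha, hlt⟩ := Finset.exists_lt_of_sum_lt h0
    exact ⟨a, ha, hlt⟩
  obtain ⟨a0, ha0m, ha0y⟩ := hstart
  have ha0r : D.src a0 = D.root := (mem_filter.mp ha0m).2
  -- step lemma
  have step : ∀ a : D.Arc, 0 < y a → (D.lay a).val + 1 < n →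
      ∃ b, D.src b = D.tgt a ∧ 0 < y b := by
    intro a hay hlt
    have hur : D.tgt a ≠ D.root := by
      intro h
      have e := htgt a
      rw [h, hroot] at e
      omega
    have hut : D.tgt a ≠ D.terminal := by
      intro h
      have e := htgt a
      rw [h, hterm] at e
      omega
    have hb := hbal _ hur hut
    have hamem : a ∈ univ.filter (fun b => D.tgt b = D.tgt a) :=
      mem_filter.mpr ⟨mem_univ _, rfl⟩
    have hle := Finset.single_le_sum (f := y) (fun b _ => hpos b) hamem
    have hsum : ∑ b ∈ univ.filter (fun b => D.src b = D.tgt a), (0:ℝ) <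
        ∑ b ∈ univ.filter (fun b => D.src b = D.tgt a), y b := by
      rw [Finset.sum_const, smul_zero, hb]
      linarith
    obtain ⟨b, hbm, hby⟩ := Finset.exists_lt_of_sum_lt hsum
    exact ⟨b, (mem_filter.mp hbm).2, hby⟩
  -- final arc lemma
  have last : ∀ a : D.Arc, 0 < y a → (D.lay a).val + 1 = n → D.tgt a = D.terminal := by
    intro a hay heq
    by_contra hne
    have hur : D.tgt a ≠ D.root := by
      intro h
      have e := htgt a
      rw [h, hroot] at e
      omega
    have hb := hbal _ hur hne
    have hamem : a ∈ univ.filter (fun b => D.tgt b = D.tgt a) :=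
      mem_filter.mpr ⟨mem_univ _, rfl⟩
    have hle := Finset.single_le_sum (f := y) (fun b _ => hpos b) hamem
    have hsum : ∑ b ∈ univ.filter (fun b => D.src b = D.tgt a), (0:ℝ) <
        ∑ b ∈ univ.filter (fun b => D.src b = D.tgt a), y b := by
      rw [Finset.sum_const, smul_zero, hb]
      linarith
    obtain ⟨b, hbm, hby⟩ := Finset.exists_lt_of_sum_lt hsum
    have hbs : D.src b = D.tgt a := (mem_filter.mp hbm).2
    have e := hsrc b
    rw [hbs, htgt a] at e
    have := (D.lay b).isLt
    omega
  -- construct the path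
  let F : D.Arc → D.Arc := fun a =>
    if h : ∃ b, D.src b = D.tgt a ∧ 0 < y b then h.choose else a
  let g : ℕ → D.Arc := fun k => F^[k] a0
  have hg0 : g 0 = a0 := rfl
  have hgs : ∀ k, g (k + 1) = F (g k) := fun k => Function.iterate_succ_apply' F k a0
  have inv : ∀ k, k < n → 0 < y (g k) ∧ (D.lay (g k)).val = k := by
    intro k
    induction k with
    | zero =>
      intro _
      rw [hg0]
      refine ⟨ha0y, ?_⟩
      have e := hsrc a0
      rw [ha0r, hroot] at e
      omega
    | succ k ih =>
      intro hk1
      obtain ⟨hky, hkl⟩ := ih (by omega)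
      have hex : ∃ b, D.src b = D.tgt (g k) ∧ 0 < y b := step _ hky (by omega)
      have hgk : g (k + 1) = hex.choose := by
        rw [hgs]
        simp only [F]
        rw [dif_pos hex]
      obtain ⟨hb1, hb2⟩ := hex.choose_spec
      refine ⟨by rw [hgk]; exact hb2, ?_⟩
      rw [hgk]
      have e := hsrc hex.choose
      rw [hb1, htgt] at e
      omega
  have chain : ∀ k, k + 1 < n → D.src (g (k + 1)) = D.tgt (g k) := by
    intro k hk
    obtain ⟨hky, hkl⟩ := inv k (by omega)
    have hex : ∃ b, D.src b = D.tgt (g k) ∧ 0 < y b := step _ hky (by omega)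
    have hgk : g (k + 1) = hex.choose := by
      rw [hgs]
      simp only [F]
      rw [dif_pos hex]
    rw [hgk]
    exact hex.choose_spec.1
  refine ⟨fun i => g i.val, ⟨?_, ?_, ?_, ?_⟩, fun i => (inv i.val i.isLt).1⟩
  · intro i
    exact Fin.ext (inv i.val i.isLt).2
  · intro i hi
    show D.src (g i.val) = D.root
    rw [hi, hg0, ha0r]
  · intro i hi
    exact last _ (inv i.val i.isLt).1 (by rw [(inv i.val i.isLt).2]; exact hi)
  · intro i hi
    exact (chain i.val hi).symm

end Aux

open Classical in
lemma main_ind {n : ℕ} (D : DD n) [Fintype D.Arc] [DecidableEq D.V]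
    (hn : 0 < n) (nlay : D.V → ℕ)
    (hsrc : ∀ a, nlay (D.src a) = (D.lay a : ℕ))
    (htgt : ∀ a, nlay (D.tgt a) = (D.lay a : ℕ) + 1)
    (hroot : nlay D.root = 0) (hterm : nlay D.terminal = n) :
    ∀ k : ℕ, ∀ (x : Fin n → ℝ) (y : D.Arc → ℝ),
      (univ.filter (fun a => y a ≠ 0)).card ≤ k → (x, y) ∈ NF D →
      x ∈ convexHull ℝ (D.pointR '' {p | D.IsPath p}) := by
  intro k
  induction k with
  | zero =>
    intro x y hcard hxy
    exfalso
    obtain ⟨hy0, hbal, hr, ht, hlink⟩ := hxy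
    dsimp only at hy0 hbal hr ht hlink
    have hzero : ∀ a, y a = 0 := by
      intro a
      by_contra h
      have hmem : a ∈ univ.filter (fun a => y a ≠ 0) := mem_filter.mpr ⟨mem_univ _, h⟩
      have := Finset.card_pos.mpr ⟨a, hmem⟩
      omega
    rw [Finset.sum_eq_zero (fun a _ => hzero a)] at hr
    norm_num at hr
  | succ k ih =>
    intro x y hcard hxy
    obtain ⟨hy0, hbal, hr, ht, hlink⟩ := hxy
    dsimp only at hy0 hbal hr ht hlink
    obtain ⟨p, hp, hppos⟩ :=
      exists_pos_path D nlay hsrc htgt hroot hterm hn y hy0 hbal hr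
    obtain ⟨hy0', hbal', hr', ht', hlink'⟩ :=
      pathFlow_mem_NF D nlay hsrc htgt hroot hterm hn hp
    dsimp only at hy0' hbal' hr' ht' hlink'
    have hne : (Finset.univ : Finset (Fin n)).Nonempty := ⟨⟨0, hn⟩, mem_univ _⟩
    set ε := Finset.univ.inf' hne (fun i => y (p i)) with hεdef
    have hεpos : 0 < ε := (Finset.lt_inf'_iff hne).mpr (fun i _ => hppos i)
    have hεle : ∀ i, ε ≤ y (p i) := fun i => Finset.inf'_le _ (mem_univ i)
    obtain ⟨i0, _, hi0⟩ := Finset.exists_mem_eq_inf' hne (fun i => y (p i))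
    have hε1 : ε ≤ 1 := by
      have hmem : p ⟨0, hn⟩ ∈ univ.filter (fun a => D.src a = D.root) :=
        mem_filter.mpr ⟨mem_univ _, hp.2.1 ⟨0, hn⟩ rfl⟩
      have hle := Finset.single_le_sum (f := y) (fun b _ => hy0 b) hmem
      have := hεle ⟨0, hn⟩
      linarith [hr ▸ hle]
    by_cases hcase : ε = 1
    · -- y is exactly the path flow
      have hyyp : ∀ a, y a = pathFlow D p a := by
        have hz := flow_eq_zero D nlay hsrc htgt hroot hterm
          (fun a => y a - pathFlow D p a)
          (by
            intro a
            by_cases h : ∃ i, p i = a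
            · obtain ⟨i, rfl⟩ := h
              rw [pathFlow_eq_one]
              have := hεle i
              rw [hcase] at this
              linarith
            · rw [pathFlow_eq_zero D (fun i hi => h ⟨i, hi⟩)]
              simp only [sub_zero]
              exact hy0 a)
          (by
            intro u h1 h2
            rw [Finset.sum_sub_distrib, Finset.sum_sub_distrib,
              hbal u h1 h2, hbal' u h1 h2])
          (by rw [Finset.sum_sub_distrib, hr, hr', sub_self])
        intro a
        have := hz a
        linarith
      have hx : x = D.pointR p := by
        funext i
        rw [← hlink i, ← hlink' i]
        exact Finset.sum_congr rfl (fun a _ => by rw [hyyp a])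
      exact subset_convexHull ℝ _ ⟨p, hp, hx.symm⟩
    · have hε1' : ε < 1 := lt_of_le_of_ne hε1 hcase
      have hc : (0:ℝ) < 1 - ε := by linarith
      have hc' : (1:ℝ) - ε ≠ 0 := ne_of_gt hc
      set y' : D.Arc → ℝ := fun a => (y a - ε * pathFlow D p a) / (1 - ε) with hy'def
      set x' : Fin n → ℝ := fun i => (x i - ε * (D.val (p i) : ℝ)) / (1 - ε) with hx'def
      have key : ∀ (P : D.Arc → Prop) (inst : DecidablePred P) (w : D.Arc → ℝ),
          ∑ a ∈ univ.filter P, w a * y' a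
            = (∑ a ∈ univ.filter P, w a * y a
                - ε * ∑ a ∈ univ.filter P, w a * pathFlow D p a) / (1 - ε) := by
        intro P inst w
        rw [Finset.mul_sum, ← Finset.sum_sub_distrib, Finset.sum_div]
        apply Finset.sum_congr rfl
        intro a _
        simp only [hy'def]
        ring
      have key1 : ∀ (P : D.Arc → Prop) (inst : DecidablePred P),
          ∑ a ∈ univ.filter P, y' a
            = (∑ a ∈ univ.filter P, y a
                - ε * ∑ a ∈ univ.filter P, pathFlow D p a) / (1 - ε) := by
        intro P inst
        have := key P inst (fun _ => 1)
        simpa using this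
      have hy'NF : (x', y') ∈ NF D := by
        refine ⟨?_, ?_, ?_, ?_, ?_⟩
        · intro a
          apply div_nonneg _ hc.le
          by_cases h : ∃ i, p i = a
          · obtain ⟨i, rfl⟩ := h
            rw [pathFlow_eq_one]
            have := hεle i
            linarith
          · rw [pathFlow_eq_zero D (fun i hi => h ⟨i, hi⟩)]
            have := hy0 a
            linarith
        · intro u h1 h2
          show ∑ a ∈ univ.filter _, y' a = ∑ a ∈ univ.filter _, y' a
          rw [key1 _ _, key1 _ _, hbal u h1 h2, hbal' u h1 h2]
        · show ∑ a ∈ univ.filter _, y' a = 1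
          rw [key1 _ _, hr, hr', mul_one, div_self hc']
        · show ∑ a ∈ univ.filter _, y' a = 1
          rw [key1 _ _, ht, ht', mul_one, div_self hc']
        · intro i
          show ∑ a ∈ univ.filter _, (D.val a : ℝ) * y' a = x' i
          rw [key _ _ _, hlink i, hlink' i]
          rfl
      have hsub : univ.filter (fun a => y' a ≠ 0) ⊂ univ.filter (fun a => y a ≠ 0) := by
        rw [Finset.ssubset_iff_of_subset]
        · refine ⟨p i0, mem_filter.mpr ⟨mem_univ _, ?_⟩, ?_⟩
          · have := hppos i0
            intro h
            rw [h] at this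
            exact lt_irrefl _ this
          · intro hmem
            have : y' (p i0) ≠ 0 := (mem_filter.mp hmem).2
            apply this
            simp only [hy'def, pathFlow_eq_one, mul_one, ← hi0, ← hεdef, sub_self, zero_div]
        · intro a ha
          rw [mem_filter] at ha ⊢
          refine ⟨mem_univ _, ?_⟩
          intro h
          apply ha.2
          have hnp : ∀ i, p i ≠ a := by
            intro i hi
            have := hppos i
            rw [hi, h] at this
            exact lt_irrefl _ this
          simp only [hy'def, pathFlow_eq_zero D hnp, h, mul_zero, sub_zero, zero_div]
      have hcard' : (univ.filter (fun a => y' a ≠ 0)).card ≤ k := by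
        have := Finset.card_lt_card hsub
        omega
      have hx'conv := ih x' y' hcard' hy'NF
      have hpconv : D.pointR p ∈ convexHull ℝ (D.pointR '' {p | D.IsPath p}) :=
        subset_convexHull ℝ _ ⟨p, hp, rfl⟩
      have hcomb := (convex_convexHull ℝ (D.pointR '' {p | D.IsPath p}))
        hpconv hx'conv hεpos.le hc.le (by ring)
      have hxeq : x = ε • D.pointR p + (1 - ε) • x' := by
        funext i
        simp only [Pi.add_apply, Pi.smul_apply, smul_eq_mul, hx'def, DD.pointR]
        field_simp
        ring
      rw [hxeq]
      exact hcomb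


/-- For a decision diagram with binary arc values, the projection of the network flow
polytope `NF(D)` onto the `x`-variables equals the convex hull of `Sol(D)`. -/
theorem stmt1 {n : ℕ} (D : DD n) [Fintype D.Arc] [DecidableEq D.V]
    (hn : 0 < n)
    (nlay : D.V → ℕ)
    (hsrc : ∀ a, nlay (D.src a) = (D.lay a : ℕ))
    (htgt : ∀ a, nlay (D.tgt a) = (D.lay a : ℕ) + 1)
    (hroot : nlay D.root = 0) (hterm : nlay D.terminal = n)
    (hbin : ∀ a : D.Arc, D.val a = 0 ∨ D.val a = 1) :
    {x : Fin n → ℝ | ∃ y : D.Arc → ℝ, (x, y) ∈ NF D}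
      = convexHull ℝ (D.pointR '' {p | D.IsPath p}) := by
  classical
  apply Set.Subset.antisymm
  · rintro x ⟨y, hy⟩
    exact main_ind D hn nlay hsrc htgt hroot hterm
      (univ.filter (fun a => y a ≠ 0)).card x y le_rfl hy
  · apply convexHull_min
    · rintro _ ⟨p, hp, rfl⟩
      exact ⟨pathFlow D p, pathFlow_mem_NF D nlay hsrc htgt hroot hterm hn hp⟩
    · rintro x1 ⟨y1, hy1⟩ x2 ⟨y2, hy2⟩ a b ha hb hab
      obtain ⟨h10, h1bal, h1r, h1t, h1link⟩ := hy1
      obtain ⟨h20, h2bal, h2r, h2t, h2link⟩ := hy2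
      dsimp only at h10 h1bal h1r h1t h1link h20 h2bal h2r h2t h2link
      refine ⟨fun c => a * y1 c + b * y2 c, ?_, ?_, ?_, ?_, ?_⟩
      · intro c
        exact add_nonneg (mul_nonneg ha (h10 c)) (mul_nonneg hb (h20 c))
      · intro u hu1 hu2
        show ∑ c ∈ univ.filter _, (a * y1 c + b * y2 c)
          = ∑ c ∈ univ.filter _, (a * y1 c + b * y2 c)
        rw [Finset.sum_add_distrib, Finset.sum_add_distrib,
          ← Finset.mul_sum, ← Finset.mul_sum, ← Finset.mul_sum, ← Finset.mul_sum,
          h1bal u hu1 hu2, h2bal u hu1 hu2]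
      · show ∑ c ∈ univ.filter _, (a * y1 c + b * y2 c) = 1
        rw [Finset.sum_add_distrib, ← Finset.mul_sum, ← Finset.mul_sum, h1r, h2r,
          mul_one, mul_one, hab]
      · show ∑ c ∈ univ.filter _, (a * y1 c + b * y2 c) = 1
        rw [Finset.sum_add_distrib, ← Finset.mul_sum, ← Finset.mul_sum, h1t, h2t,
          mul_one, mul_one, hab]
      · intro i
        show ∑ c ∈ univ.filter _, (D.val c : ℝ) * (a * y1 c + b * y2 c)
          = (a • x1 + b • x2) i
        have : ∀ c : D.Arc, (D.val c : ℝ) * (a * y1 c + b * y2 c)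
            = a * ((D.val c : ℝ) * y1 c) + b * ((D.val c : ℝ) * y2 c) := by
          intro c; ring
        simp only [this]
        rw [Finset.sum_add_distrib, ← Finset.mul_sum, ← Finset.mul_sum,
          h1link i, h2link i]
        simp [Pi.add_apply, Pi.smul_apply, smul_eq_mul]
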